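/- Let T be a finite set and w : T × T → ℝ a weight function. Let x : T × T → ℕ be a b-matching consistent with degree functions (y^L, y^R), and let γ be a cycle in the complete bipartite graph with both parts equal to T, with associated alternating matchings M_LR^γ and M_RL^γ. Suppose x(e) ≥ 1 for every edge e ∈ M_LR^γ. Define x' : T × T → ℕ by x'(e) = x(e) − 1 for e ∈ M_LR^γ \ M_RL^γ, x'(e) = x(e) + 1 for e ∈ M_RL^γ \ M_LR^γ, and x'(e) = x(e) otherwise. Then x' is a b-matching consistent with (y^L, y^R), and its weight satisfies w(x') = w(x) − w(M_LR^γ) + w(M_RL^γ). -/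

import Mathlib

open scoped Classical

/-- A cycle in the complete bipartite graph with both parts equal to `T`:
an alternating sequence of `len ≥ 1` distinct left vertices and `len` distinct
right vertices. -/
structure BipCycle (T : Type*) where
  len : ℕ
  one_le_len : 1 ≤ len
  left : Fin len → T
  right : Fin len → T
  left_inj : Function.Injective left
  right_inj : Function.Injective right

/-- The matching `M_LR^γ = {(c_i^L, c_i^R) : 1 ≤ i ≤ ℓ}` of a cycle `γ`. -/
noncomputable def BipCycle.MLR {T : Type*} (γ : BipCycle T) : Finset (T × T) :=
  Finset.image (fun i => (γ.left i, γ.right i)) Finset.univ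

/-- The matching `M_RL^γ = {(c_{i+1 mod ℓ}^L, c_i^R) : 1 ≤ i ≤ ℓ}` of a cycle `γ`. -/
noncomputable def BipCycle.MRL {T : Type*} (γ : BipCycle T) : Finset (T × T) :=
  Finset.image (fun i => (γ.left (finRotate γ.len i), γ.right i)) Finset.univ


/-- Rerouting a b-matching along a cycle: if `x` is a b-matching consistent with degree
functions `(yL, yR)` that uses every edge of `M_LR^γ`, then replacing `M_LR^γ` by
`M_RL^γ` yields a b-matching `x'` that is still consistent with `(yL, yR)` and whose
weight is `w(x) - w(M_LR^γ) + w(M_RL^γ)`. -/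
theorem reroute_bMatching {T : Type*} [Fintype T] (w : T × T → ℝ)
    (yL yR : T → ℕ) (x : T × T → ℕ)
    (hL : ∀ t : T, ∑ r : T, x (t, r) = yL t)
    (hR : ∀ t : T, ∑ r : T, x (r, t) = yR t)
    (γ : BipCycle T)
    (hx : ∀ e ∈ γ.MLR, 1 ≤ x e)
    (x' : T × T → ℕ)
    (hx' : ∀ e : T × T,
      x' e = if e ∈ γ.MLR \ γ.MRL then x e - 1
             else if e ∈ γ.MRL \ γ.MLR then x e + 1
             else x e) :
    (∀ t : T, ∑ r : T, x' (t, r) = yL t) ∧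
    (∀ t : T, ∑ r : T, x' (r, t) = yR t) ∧
    ∑ e : T × T, (x' e : ℝ) * w e
      = ∑ e : T × T, (x e : ℝ) * w e - ∑ e ∈ γ.MLR, w e + ∑ e ∈ γ.MRL, w e := by
  classical
  have memMLR : ∀ a b : T, ((a, b) ∈ γ.MLR ↔ ∃ i, γ.left i = a ∧ γ.right i = b) := by
    intro a b
    simp [BipCycle.MLR, Prod.ext_iff]
  have memMRL : ∀ a b : T,
      ((a, b) ∈ γ.MRL ↔ ∃ i, γ.left (finRotate γ.len i) = a ∧ γ.right i = b) := by
    intro a b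
    simp [BipCycle.MRL, Prod.ext_iff]
  -- key identity over ℤ
  have key : ∀ e : T × T, (x' e : ℤ) =
      (x e : ℤ) - (if e ∈ γ.MLR then 1 else 0) + (if e ∈ γ.MRL then 1 else 0) := by
    intro e
    rw [hx' e]
    by_cases h1 : e ∈ γ.MLR <;> by_cases h2 : e ∈ γ.MRL
    · simp [Finset.mem_sdiff, h1, h2]
    · have hx1 : 1 ≤ x e := hx e h1
      simp [Finset.mem_sdiff, h1, h2, Nat.cast_sub hx1]
    · simp [Finset.mem_sdiff, h1, h2]
    · simp [Finset.mem_sdiff, h1, h2]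
  -- left degree indicator sums agree
  have degL : ∀ t : T,
      (∑ r : T, (if (t, r) ∈ γ.MLR then (1:ℤ) else 0)) =
      (∑ r : T, (if (t, r) ∈ γ.MRL then (1:ℤ) else 0)) := by
    intro t
    by_cases h : ∃ i0, γ.left i0 = t
    · obtain ⟨i0, hi0⟩ := h
      have h1 : ∀ r : T, ((t, r) ∈ γ.MLR ↔ r = γ.right i0) := by
        intro r
        rw [memMLR]
        constructor
        · rintro ⟨i, hl, hr⟩
          have : i = i0 := γ.left_inj (hl.trans hi0.symm)
          subst this; exact hr.symm
        · rintro rfl; exact ⟨i0, hi0, rfl⟩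
      have h2 : ∀ r : T,
          ((t, r) ∈ γ.MRL ↔ r = γ.right ((finRotate γ.len).symm i0)) := by
        intro r
        rw [memMRL]
        constructor
        · rintro ⟨i, hl, hr⟩
          have hii : finRotate γ.len i = i0 := γ.left_inj (hl.trans hi0.symm)
          have : i = (finRotate γ.len).symm i0 := by
            rw [← hii, Equiv.symm_apply_apply]
          subst this; exact hr.symm
        · rintro rfl
          exact ⟨(finRotate γ.len).symm i0, by rw [Equiv.apply_symm_apply]; exact hi0, rfl⟩
      simp [h1, h2]
    · push_neg at h
      have h1 : ∀ r : T, ¬ ((t, r) ∈ γ.MLR) := by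
        intro r hm
        obtain ⟨i, hl, _⟩ := (memMLR t r).1 hm
        exact h i hl
      have h2 : ∀ r : T, ¬ ((t, r) ∈ γ.MRL) := by
        intro r hm
        obtain ⟨i, hl, _⟩ := (memMRL t r).1 hm
        exact h (finRotate γ.len i) hl
      simp [h1, h2]
  -- right degree indicator sums agree
  have degR : ∀ t : T,
      (∑ r : T, (if (r, t) ∈ γ.MLR then (1:ℤ) else 0)) =
      (∑ r : T, (if (r, t) ∈ γ.MRL then (1:ℤ) else 0)) := by
    intro t
    by_cases h : ∃ i0, γ.right i0 = t
    · obtain ⟨i0, hi0⟩ := h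
      have h1 : ∀ r : T, ((r, t) ∈ γ.MLR ↔ r = γ.left i0) := by
        intro r
        rw [memMLR]
        constructor
        · rintro ⟨i, hl, hr⟩
          have : i = i0 := γ.right_inj (hr.trans hi0.symm)
          subst this; exact hl.symm
        · rintro rfl; exact ⟨i0, rfl, hi0⟩
      have h2 : ∀ r : T, ((r, t) ∈ γ.MRL ↔ r = γ.left (finRotate γ.len i0)) := by
        intro r
        rw [memMRL]
        constructor
        · rintro ⟨i, hl, hr⟩
          have : i = i0 := γ.right_inj (hr.trans hi0.symm)
          subst this; exact hl.symm
        · rintro rfl; exact ⟨i0, rfl, hi0⟩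
      simp [h1, h2]
    · push_neg at h
      have h1 : ∀ r : T, ¬ ((r, t) ∈ γ.MLR) := by
        intro r hm
        obtain ⟨i, _, hr⟩ := (memMLR r t).1 hm
        exact h i hr
      have h2 : ∀ r : T, ¬ ((r, t) ∈ γ.MRL) := by
        intro r hm
        obtain ⟨i, _, hr⟩ := (memMRL r t).1 hm
        exact h i hr
      simp [h1, h2]
  refine ⟨?_, ?_, ?_⟩
  · intro t
    have : (∑ r : T, (x' (t, r) : ℤ)) = (yL t : ℤ) := by
      calc (∑ r : T, (x' (t, r) : ℤ))
          = ∑ r : T, ((x (t, r) : ℤ)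
              - (if (t, r) ∈ γ.MLR then 1 else 0)
              + (if (t, r) ∈ γ.MRL then 1 else 0)) := by
            exact Finset.sum_congr rfl fun r _ => key (t, r)
        _ = (∑ r : T, (x (t, r) : ℤ))
              - (∑ r : T, (if (t, r) ∈ γ.MLR then (1:ℤ) else 0))
              + (∑ r : T, (if (t, r) ∈ γ.MRL then (1:ℤ) else 0)) := by
            rw [Finset.sum_add_distrib, Finset.sum_sub_distrib]
        _ = (yL t : ℤ) := by rw [degL t]; ring_nf; exact_mod_cast hL t
    exact_mod_cast this
  · intro t
    have : (∑ r : T, (x' (r, t) : ℤ)) = (yR t : ℤ) := by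
      calc (∑ r : T, (x' (r, t) : ℤ))
          = ∑ r : T, ((x (r, t) : ℤ)
              - (if (r, t) ∈ γ.MLR then 1 else 0)
              + (if (r, t) ∈ γ.MRL then 1 else 0)) := by
            exact Finset.sum_congr rfl fun r _ => key (r, t)
        _ = (∑ r : T, (x (r, t) : ℤ))
              - (∑ r : T, (if (r, t) ∈ γ.MLR then (1:ℤ) else 0))
              + (∑ r : T, (if (r, t) ∈ γ.MRL then (1:ℤ) else 0)) := by
            rw [Finset.sum_add_distrib, Finset.sum_sub_distrib]
        _ = (yR t : ℤ) := by rw [degR t]; ring_nf; exact_mod_cast hR t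
    exact_mod_cast this
  · have keyR : ∀ e : T × T, (x' e : ℝ) =
        (x e : ℝ) - (if e ∈ γ.MLR then 1 else 0) + (if e ∈ γ.MRL then 1 else 0) := by
      intro e
      have := key e
      have h2 : ((x' e : ℤ) : ℝ) = (((x e : ℤ) - (if e ∈ γ.MLR then 1 else 0)
          + (if e ∈ γ.MRL then 1 else 0) : ℤ) : ℝ) := by exact_mod_cast this
      push_cast at h2
      split_ifs at h2 ⊢ <;> simpa using h2
    calc ∑ e : T × T, (x' e : ℝ) * w e
        = ∑ e : T × T, (((x e : ℝ) - (if e ∈ γ.MLR then 1 else 0)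
            + (if e ∈ γ.MRL then 1 else 0)) * w e) := by
          exact Finset.sum_congr rfl fun e _ => by rw [keyR e]
      _ = ∑ e : T × T, ((x e : ℝ) * w e
            - (if e ∈ γ.MLR then w e else 0)
            + (if e ∈ γ.MRL then w e else 0)) := by
          refine Finset.sum_congr rfl fun e _ => ?_
          split_ifs <;> ring
      _ = (∑ e : T × T, (x e : ℝ) * w e)
            - (∑ e : T × T, if e ∈ γ.MLR then w e else 0)
            + (∑ e : T × T, if e ∈ γ.MRL then w e else 0) := by
          rw [Finset.sum_add_distrib, Finset.sum_sub_distrib]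
      _ = ∑ e : T × T, (x e : ℝ) * w e - ∑ e ∈ γ.MLR, w e + ∑ e ∈ γ.MRL, w e := by
          rw [Finset.sum_ite_mem, Finset.sum_ite_mem, Finset.univ_inter, Finset.univ_inter]
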